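/- Let 𝔓 = {{0}, M, N, N̂, X} be a pentagon subspace lattice in a Banach space X (with N ⊊ N̂, M ∨ N = X, M ∧ N̂ = {0}). Then the family of closed subspaces invariant under all rank-one operators in Alg(𝔓) equals 𝔓 ∪ {K closed : N ⊆ K ⊆ N̂}; in particular, if N̂/N has dimension greater than 1 then 𝔓 is not strongly reflexive (N_* = N̂ ≠ N). -/

import Mathlib

open ContinuousLinearMap

/-- The closed linear span (join) of a family of subspaces. -/
noncomputable def cJoin {X : Type*} [NormedAddCommGroup X] [NormedSpace ℂ X]
    (S : Set (Submodule ℂ X)) : Submodule ℂ X :=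
  (sSup S).topologicalClosure

/-- Join of two subspaces in the lattice of closed subspaces. -/
noncomputable def cJoin2 {X : Type*} [NormedAddCommGroup X] [NormedSpace ℂ X]
    (M N : Submodule ℂ X) : Submodule ℂ X :=
  (M ⊔ N).topologicalClosure

/-- A subspace lattice: a complete lattice of closed subspaces containing the trivial ones. -/
def IsSubspaceLattice {X : Type*} [NormedAddCommGroup X] [NormedSpace ℂ X]
    (L : Set (Submodule ℂ X)) : Prop :=
  (∀ M ∈ L, IsClosed (M : Set X)) ∧ ⊥ ∈ L ∧ ⊤ ∈ L ∧
    ∀ S ⊆ L, cJoin S ∈ L ∧ sInf S ∈ L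

/-- Alg(F): bounded operators leaving every member of F invariant. -/
def algOf {X : Type*} [NormedAddCommGroup X] [NormedSpace ℂ X]
    (L : Set (Submodule ℂ X)) : Set (X →L[ℂ] X) :=
  {A | ∀ M ∈ L, ∀ x ∈ M, A x ∈ M}

/-- Lat(T): closed subspaces invariant under every operator in T. -/
def latOf {X : Type*} [NormedAddCommGroup X] [NormedSpace ℂ X]
    (T : Set (X →L[ℂ] X)) : Set (Submodule ℂ X) :=
  {M | IsClosed (M : Set X) ∧ ∀ A ∈ T, ∀ x ∈ M, A x ∈ M}

/-- The rank-one operator e ⊗ η : x ↦ η(x) • e. -/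
noncomputable def rankOne {X : Type*} [NormedAddCommGroup X] [NormedSpace ℂ X]
    (e : X) (η : X →L[ℂ] ℂ) : X →L[ℂ] X :=
  η.smulRight e

/-- The rank-one operators in a set of operators. -/
noncomputable def Rk1 {X : Type*} [NormedAddCommGroup X] [NormedSpace ℂ X]
    (T : Set (X →L[ℂ] X)) : Set (X →L[ℂ] X) :=
  {A ∈ T | ∃ (e : X) (η : X →L[ℂ] ℂ), e ≠ 0 ∧ η ≠ 0 ∧ A = rankOne e η}

/-- M₋ = ⋁{K ∈ L : M ⊄ K}. -/
noncomputable def mMinus {X : Type*} [NormedAddCommGroup X] [NormedSpace ℂ X]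
    (L : Set (Submodule ℂ X)) (M : Submodule ℂ X) : Submodule ℂ X :=
  cJoin {K | K ∈ L ∧ ¬ M ≤ K}

/-- M₊ = ⋀{K ∈ L : K ⊄ M}. -/
noncomputable def mPlus {X : Type*} [NormedAddCommGroup X] [NormedSpace ℂ X]
    (L : Set (Submodule ℂ X)) (M : Submodule ℂ X) : Submodule ℂ X :=
  sInf {K | K ∈ L ∧ ¬ K ≤ M}

/-- N_* = ⋀{M₋ : M ∈ L, M ⊄ N}. -/
noncomputable def nStar {X : Type*} [NormedAddCommGroup X] [NormedSpace ℂ X]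
    (L : Set (Submodule ℂ X)) (N : Submodule ℂ X) : Submodule ℂ X :=
  sInf {P | ∃ M, M ∈ L ∧ ¬ M ≤ N ∧ P = mMinus L M}

/-- The cyclic subspace [Alg(L)x]: closed linear span of the orbit of x under Alg(L). -/
noncomputable def cyclicSubspace {X : Type*} [NormedAddCommGroup X] [NormedSpace ℂ X]
    (L : Set (Submodule ℂ X)) (x : X) : Submodule ℂ X :=
  (Submodule.span ℂ ((fun A : X →L[ℂ] X => A x) '' algOf L)).topologicalClosure

/-- The pinch points of a family of subspaces. -/
def pinOf {X : Type*} [NormedAddCommGroup X] [NormedSpace ℂ X]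
    (L : Set (Submodule ℂ X)) : Set (Submodule ℂ X) :=
  {P | P ∈ L ∧ ∀ M ∈ L, M ≤ P ∨ P ≤ M}

/-- Hahn–Banach separation of a point from a closed subspace. -/
lemma sep_functional {X : Type*} [NormedAddCommGroup X] [NormedSpace ℂ X]
    (S : Submodule ℂ X) (hS : IsClosed (S : Set X)) {x : X} (hx : x ∉ S) :
    ∃ η : X →L[ℂ] ℂ, (∀ s ∈ S, η s = 0) ∧ η x ≠ 0 := by
  haveI : IsClosed (S : Set X) := hS
  have hmk : (Submodule.Quotient.mk x : X ⧸ S) ≠ 0 := by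
    simpa [Submodule.Quotient.mk_eq_zero] using hx
  obtain ⟨g, -, hg⟩ := exists_dual_vector ℂ _ (norm_ne_zero_iff.mpr hmk)
  let π : X →L[ℂ] X ⧸ S := ⟨S.mkQ, S.isOpenQuotientMap_mkQ.continuous⟩
  refine ⟨g.comp π, fun s hs => ?_, ?_⟩
  · have h0 : π s = 0 := by
      show S.mkQ s = 0
      simpa [Submodule.Quotient.mk_eq_zero] using hs
    simp [ContinuousLinearMap.comp_apply, h0]
  · have hπ : π x = Submodule.Quotient.mk x := rfl
    show g (π x) ≠ 0
    rw [hπ, hg]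
    exact RCLike.ofReal_ne_zero.mpr (norm_ne_zero_iff.mpr hmk)

/-- For a pentagon subspace lattice 𝔓 = {0, M, N, N̂, X}, the closed subspaces invariant
under all rank-one operators of Alg(𝔓) are exactly 𝔓 ∪ [N, N̂]; in particular N_* = N̂ ≠ N,
so 𝔓 is not strongly reflexive. -/
theorem pentagon_lat_rankOne
    {X : Type*} [NormedAddCommGroup X] [NormedSpace ℂ X] [CompleteSpace X]
    (M N Nh : Submodule ℂ X)
    (hMc : IsClosed (M : Set X)) (hNc : IsClosed (N : Set X)) (hNhc : IsClosed (Nh : Set X))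
    (hM0 : M ≠ ⊥) (hM1 : M ≠ ⊤) (hN0 : N ≠ ⊥) (hNh1 : Nh ≠ ⊤)
    (hNNh : N < Nh) (hjoin : cJoin2 M N = ⊤) (hmeet : M ⊓ Nh = ⊥) :
    latOf (Rk1 (algOf ({⊥, M, N, Nh, ⊤} : Set (Submodule ℂ X)))) =
      ({⊥, M, N, Nh, ⊤} : Set (Submodule ℂ X)) ∪
        {K | IsClosed (K : Set X) ∧ N ≤ K ∧ K ≤ Nh} ∧
    nStar ({⊥, M, N, Nh, ⊤} : Set (Submodule ℂ X)) N = Nh ∧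
    nStar ({⊥, M, N, Nh, ⊤} : Set (Submodule ℂ X)) N ≠ N := by
  set L : Set (Submodule ℂ X) := {⊥, M, N, Nh, ⊤} with hL
  have hNNh' : N ≤ Nh := hNNh.le
  -- basic consequences
  have hMN : ¬ M ≤ N := by
    intro h
    exact hM0 (le_bot_iff.mp (hmeet ▸ le_inf le_rfl (h.trans hNNh')))
  have hMNh : ¬ M ≤ Nh := by
    intro h
    exact hM0 (le_bot_iff.mp (hmeet ▸ le_inf le_rfl h))
  have hclosure : (M ⊔ N).topologicalClosure = ⊤ := hjoin
  -- any functional vanishing on both M and N vanishes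
  have Fzero : ∀ η : X →L[ℂ] ℂ, (∀ x ∈ M, η x = 0) → (∀ x ∈ N, η x = 0) → η = 0 := by
    intro η hM hN
    have hker : M ⊔ N ≤ η.ker := sup_le (fun x hx => hM x hx) (fun x hx => hN x hx)
    have hclker : (M ⊔ N).topologicalClosure ≤ η.ker :=
      Submodule.topologicalClosure_minimal _ hker (ContinuousLinearMap.isClosed_ker η)
    rw [hclosure] at hclker
    ext x
    exact hclker (Submodule.mem_top)
  -- type 1 rank-one operators: e ∈ N, η vanishing on M
  have F1 : ∀ e ∈ N, ∀ η : X →L[ℂ] ℂ, (∀ x ∈ M, η x = 0) → rankOne e η ∈ algOf L := by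
    intro e he η hη K hK x hx
    have happ : rankOne e η x = η x • e := rfl
    simp only [hL, Set.mem_insert_iff, Set.mem_singleton_iff] at hK
    rcases hK with rfl | rfl | rfl | rfl | rfl
    · simp only [Submodule.mem_bot] at hx ⊢
      rw [happ, hx]; simp
    · rw [happ, hη x hx]; simp
    · rw [happ]; exact Submodule.smul_mem _ _ he
    · rw [happ]; exact Submodule.smul_mem _ _ (hNNh' he)
    · trivial
  -- type 2 rank-one operators: e ∈ M, η vanishing on Nh
  have F2 : ∀ e ∈ M, ∀ η : X →L[ℂ] ℂ, (∀ x ∈ Nh, η x = 0) → rankOne e η ∈ algOf L := by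
    intro e he η hη K hK x hx
    have happ : rankOne e η x = η x • e := rfl
    simp only [hL, Set.mem_insert_iff, Set.mem_singleton_iff] at hK
    rcases hK with rfl | rfl | rfl | rfl | rfl
    · simp only [Submodule.mem_bot] at hx ⊢
      rw [happ, hx]; simp
    · rw [happ]; exact Submodule.smul_mem _ _ he
    · rw [happ, hη x (hNNh' hx)]; simp
    · rw [happ, hη x hx]; simp
    · trivial
  -- forward absorption lemmas for members of lat
  have Step1 : ∀ K ∈ latOf (Rk1 (algOf L)), ¬ K ≤ M → N ≤ K := by
    intro K hK hKM e he
    obtain ⟨x, hxK, hxM⟩ := Set.not_subset.mp (fun h => hKM (fun y hy => h hy))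
    obtain ⟨η, hηM, hηx⟩ := sep_functional M hMc hxM
    by_cases he0 : e = 0
    · rw [he0]; exact K.zero_mem
    · have hη0 : η ≠ 0 := fun h => hηx (by rw [h]; rfl)
      have hmem : rankOne e η ∈ Rk1 (algOf L) :=
        ⟨F1 e he η hηM, e, η, he0, hη0, rfl⟩
      have := hK.2 _ hmem x hxK
      have happ : rankOne e η x = η x • e := rfl
      rw [happ] at this
      have := K.smul_mem (η x)⁻¹ this
      rwa [smul_smul, inv_mul_cancel₀ hηx, one_smul] at this
  have Step2 : ∀ K ∈ latOf (Rk1 (algOf L)), ¬ K ≤ Nh → M ≤ K := by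
    intro K hK hKNh e he
    obtain ⟨x, hxK, hxNh⟩ := Set.not_subset.mp (fun h => hKNh (fun y hy => h hy))
    obtain ⟨η, hηNh, hηx⟩ := sep_functional Nh hNhc hxNh
    by_cases he0 : e = 0
    · rw [he0]; exact K.zero_mem
    · have hη0 : η ≠ 0 := fun h => hηx (by rw [h]; rfl)
      have hmem : rankOne e η ∈ Rk1 (algOf L) :=
        ⟨F2 e he η hηNh, e, η, he0, hη0, rfl⟩
      have := hK.2 _ hmem x hxK
      have happ : rankOne e η x = η x • e := rfl
      rw [happ] at this
      have := K.smul_mem (η x)⁻¹ this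
      rwa [smul_smul, inv_mul_cancel₀ hηx, one_smul] at this
  -- the lattice equality
  have main : latOf (Rk1 (algOf L)) = L ∪ {K | IsClosed (K : Set X) ∧ N ≤ K ∧ K ≤ Nh} := by
    ext K
    constructor
    · intro hK
      by_cases hKM : K ≤ M
      · by_cases hKNh : K ≤ Nh
        · left
          have : K = ⊥ := le_bot_iff.mp (hmeet ▸ le_inf hKM hKNh)
          rw [this, hL]; exact Set.mem_insert _ _
        · left
          have hMK : M ≤ K := Step2 K hK hKNh
          have : K = M := le_antisymm hKM hMK
          rw [this, hL]
          exact Set.mem_insert_iff.mpr (Or.inr (Set.mem_insert _ _))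
      · have hNK : N ≤ K := Step1 K hK hKM
        by_cases hKNh : K ≤ Nh
        · right
          exact ⟨hK.1, hNK, hKNh⟩
        · left
          have hMK : M ≤ K := Step2 K hK hKNh
          have hsup : M ⊔ N ≤ K := sup_le hMK hNK
          have : K = ⊤ := by
            have := Submodule.topologicalClosure_minimal _ hsup hK.1
            rw [hclosure] at this
            exact le_antisymm le_top this
          rw [this, hL]
          simp [Set.mem_insert_iff]
    · intro hK
      rcases hK with hK | ⟨hKc, hNK, hKNh⟩
      · -- members of the pentagon
        have hKc : IsClosed (K : Set X) := by
          simp only [hL, Set.mem_insert_iff, Set.mem_singleton_iff] at hK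
          rcases hK with rfl | rfl | rfl | rfl | rfl
          · rw [Submodule.bot_coe]; exact isClosed_singleton
          · exact hMc
          · exact hNc
          · exact hNhc
          · rw [Submodule.top_coe]; exact isClosed_univ
        exact ⟨hKc, fun A hA x hx => hA.1 K hK x hx⟩
      · -- the interval [N, Nh]
        refine ⟨hKc, ?_⟩
        rintro A ⟨hAalg, e, η, he0, hη0, rfl⟩ x hx
        have happ : rankOne e η x = η x • e := rfl
        rw [happ]
        have hMinv := hAalg M (by simp [hL])
        have hNinv := hAalg N (by simp [hL])
        have hNhinv := hAalg Nh (by simp [hL])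
        -- extract disjunctions
        have disj : ∀ S : Submodule ℂ X, (∀ y ∈ S, rankOne e η y ∈ S) →
            e ∈ S ∨ ∀ y ∈ S, η y = 0 := by
          intro S hS
          by_cases h : ∀ y ∈ S, η y = 0
          · exact Or.inr h
          · push_neg at h
            obtain ⟨y, hyS, hηy⟩ := h
            have := hS y hyS
            have happy : rankOne e η y = η y • e := rfl
            rw [happy] at this
            have := S.smul_mem (η y)⁻¹ this
            rw [smul_smul, inv_mul_cancel₀ hηy, one_smul] at this
            exact Or.inl this
        rcases disj N hNinv with heN | hηN
        · exact Submodule.smul_mem _ _ (hNK heN)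
        · rcases disj Nh hNhinv with heNh | hηNh
          · rcases disj M hMinv with heM | hηM
            · have : e ∈ M ⊓ Nh := ⟨heM, heNh⟩
              rw [hmeet, Submodule.mem_bot] at this
              exact absurd this he0
            · exact absurd (Fzero η hηM hηN) hη0
          · rw [hηNh x (hKNh hx)]
            simp
  have hMm : mMinus L M = Nh := by
    have hset : {K | K ∈ L ∧ ¬ M ≤ K} = {⊥, N, Nh} := by
      ext K
      constructor
      · rintro ⟨hKL, hMK⟩
        simp only [hL, Set.mem_insert_iff, Set.mem_singleton_iff] at hKL
        rcases hKL with rfl | rfl | rfl | rfl | rfl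
        · exact Set.mem_insert _ _
        · exact absurd le_rfl hMK
        · exact Set.mem_insert_iff.mpr (Or.inr (Set.mem_insert _ _))
        · simp
        · exact absurd le_top hMK
      · intro hK
        simp only [Set.mem_insert_iff, Set.mem_singleton_iff] at hK
        rcases hK with rfl | rfl | rfl
        · exact ⟨by rw [hL]; exact Set.mem_insert _ _,
            fun h => hM0 (le_bot_iff.mp h)⟩
        · exact ⟨by rw [hL]; simp, hMN⟩
        · exact ⟨by rw [hL]; simp, hMNh⟩
    rw [mMinus, hset, cJoin]
    have : sSup ({⊥, N, Nh} : Set (Submodule ℂ X)) = Nh := by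
      rw [sSup_insert, sSup_insert, sSup_singleton]
      simp [sup_eq_right.mpr hNNh']
    rw [this, hNhc.submodule_topologicalClosure_eq]
  have hstar : nStar L N = Nh := by
    apply le_antisymm
    · apply sInf_le
      exact ⟨M, by rw [hL]; simp, hMN, hMm.symm⟩
    · apply le_sInf
      rintro P ⟨M', hM'L, hM'N, rfl⟩
      simp only [hL, Set.mem_insert_iff, Set.mem_singleton_iff] at hM'L
      have key : ∀ M'' : Submodule ℂ X, ¬ M'' ≤ M → ¬ M'' ≤ N →
          Nh ≤ mMinus L M'' := by
        intro M'' hm hn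
        have h1 : M ≤ sSup {K | K ∈ L ∧ ¬ M'' ≤ K} :=
          le_sSup ⟨by rw [hL]; simp, hm⟩
        have h2 : N ≤ sSup {K | K ∈ L ∧ ¬ M'' ≤ K} :=
          le_sSup ⟨by rw [hL]; simp, hn⟩
        have h3 : (M ⊔ N).topologicalClosure ≤ mMinus L M'' :=
          Submodule.topologicalClosure_mono (sup_le h1 h2)
        rw [hclosure] at h3
        exact le_top.trans h3
      rcases hM'L with rfl | rfl | rfl | h4 | h5
      · exact absurd bot_le hM'N
      · rw [hMm]
      · exact absurd le_rfl hM'N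
      · refine key M' ?_ hM'N
        rw [h4]
        intro h
        have hb : Nh = ⊥ := le_bot_iff.mp (hmeet ▸ le_inf h le_rfl)
        exact hN0 (le_bot_iff.mp (hb ▸ hNNh'))
      · refine key M' ?_ hM'N
        rw [h5]
        intro h
        exact hM1 (top_le_iff.mp h)
  exact ⟨main, hstar, by rw [hstar]; exact hNNh.ne'⟩
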